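/- Let 𝔤 be a finite-dimensional complex semisimple Lie algebra with Killing form κ, 𝔥 ⊆ 𝔤 a Cartan subalgebra, x₀ ∈ 𝔥, and H ∈ 𝔥 a regular element (α(H) ≠ 0 for every root α). Then the bilinear form B(u,v) = κ(⁅x₀, ⁅H, u⁆⁆, v) restricted to the subspace V = range(ad(x₀)) is nondegenerate: if u ∈ V satisfies B(u,v) = 0 for all v ∈ V, then u = 0. -/

import Mathlib

open LieAlgebra LieModule
open scoped DirectSum

/-- If `M` is an internal direct sum of submodules `p i`, and `A`, `T` are endomorphisms
preserving each `p i` such that on each `p i` the kernel of `T` is contained in that of `A`,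
then globally `T z = 0` implies `A z = 0`. -/
lemma ker_le_ker_of_isInternal {R M ι : Type*} [CommRing R] [AddCommGroup M] [Module R M]
    [DecidableEq ι] {p : ι → Submodule R M} (hint : DirectSum.IsInternal p)
    {A T : Module.End R M}
    (hA : ∀ i, Set.MapsTo A (p i) (p i)) (hT : ∀ i, Set.MapsTo T (p i) (p i))
    (hk : ∀ i, ∀ x ∈ p i, T x = 0 → A x = 0)
    {z : M} (hz : T z = 0) : A z = 0 := by
  set e := LinearEquiv.ofBijective (DirectSum.coeLinearMap p) hint with he
  obtain ⟨w, rfl⟩ : ∃ w, DirectSum.coeLinearMap p w = z := ⟨e.symm z, e.apply_symm_apply z⟩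
  -- the "diagonal" lift of an endomorphism preserving all the `p i`
  let F : ∀ (S : Module.End R M), (∀ i, Set.MapsTo S (p i) (p i)) →
      ((⨁ i, p i) →ₗ[R] ⨁ i, p i) := fun S hS =>
    DirectSum.toModule R ι _ fun i =>
      (DirectSum.lof R ι (fun j => ↥(p j)) i) ∘ₗ (S.restrict (hS i))
  have key : ∀ (S : Module.End R M) (hS : ∀ i, Set.MapsTo S (p i) (p i)),
      S ∘ₗ (DirectSum.coeLinearMap p) = (DirectSum.coeLinearMap p) ∘ₗ F S hS := by
    intro S hS
    refine DirectSum.linearMap_ext _ fun i => ?_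
    ext x
    simp only [LinearMap.comp_apply, F]
    rw [DirectSum.toModule_lof]
    simp only [LinearMap.comp_apply, DirectSum.lof_eq_of, DirectSum.coeLinearMap_of,
      LinearMap.restrict_apply]
    rfl
  have keyw : ∀ (S : Module.End R M) (hS : ∀ i, Set.MapsTo S (p i) (p i)),
      S (DirectSum.coeLinearMap p w) = DirectSum.coeLinearMap p (F S hS w) :=
    fun S hS => LinearMap.congr_fun (key S hS) w
  have hcomponent : ∀ (S : Module.End R M) (hS : ∀ i, Set.MapsTo S (p i) (p i))
      (v : ⨁ i, p i) (i : ι), (F S hS v) i = S.restrict (hS i) (v i) := by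
    intro S hS v i
    induction v using DirectSum.induction_on with
    | zero => simp
    | of j x =>
      rw [show ((DirectSum.of (fun j => ↥(p j)) j) x) = DirectSum.lof R ι (fun j => ↥(p j)) j x
        from rfl]
      simp only [F, DirectSum.toModule_lof]
      by_cases hij : j = i
      · subst hij
        simp only [LinearMap.comp_apply, DirectSum.lof_eq_of, DirectSum.of_eq_same]
      · simp only [LinearMap.comp_apply, DirectSum.lof_eq_of,
          DirectSum.of_eq_of_ne _ _ _ (Ne.symm hij), map_zero]
    | add a b ha hb =>
      simp only [map_add, DirectSum.add_apply, ha, hb]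
  have h0 : F T hT w = 0 := by
    apply e.injective
    simp only [map_zero]
    change DirectSum.coeLinearMap p (F T hT w) = 0
    rw [← keyw T hT, hz]
  have hcomp : ∀ i, T (w i : M) = 0 := by
    intro i
    have h1 := hcomponent T hT w i
    rw [h0] at h1
    have h2 : T.restrict (hT i) (w i) = 0 := h1.symm
    exact congrArg Subtype.val h2
  rw [keyw A hA]
  have hzero : F A hA w = 0 := by
    refine DFunLike.ext _ _ fun i => ?_
    rw [hcomponent A hA w i]
    change (A.restrict (hA i)) (w i) = 0
    exact Subtype.ext (hk i (w i) (w i).2 (hcomp i))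
  rw [hzero, map_zero]

/-- Let `𝔤` be a finite-dimensional complex semisimple Lie algebra with Killing form `κ`,
`𝔥` a Cartan subalgebra, `x₀ ∈ 𝔥` and `H ∈ 𝔥` regular (i.e. `α H ≠ 0` for every root `α`).
Then the bilinear form `B(u,v) = κ(⁅x₀, ⁅H, u⁆⁆, v)` is nondegenerate on the
subspace `V = range (ad x₀)`: if `u ∈ V` pairs to zero with every `v ∈ V`, then `u = 0`. -/
theorem hessian_nondegenerate_on_range_ad
    (L : Type*) [LieRing L] [LieAlgebra ℂ L] [Module.Finite ℂ L]
    [LieAlgebra.IsKilling ℂ L]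
    (H : LieSubalgebra ℂ L) [H.IsCartanSubalgebra]
    (x₀ : L) (hx₀ : x₀ ∈ H)
    (h : L) (hh : h ∈ H)
    (hreg : ∀ α : LieModule.Weight ℂ H L, α.IsNonZero → α ⟨h, hh⟩ ≠ 0) :
    ∀ u ∈ LinearMap.range (LieAlgebra.ad ℂ L x₀),
      (∀ v ∈ LinearMap.range (LieAlgebra.ad ℂ L x₀),
        killingForm ℂ L ⁅x₀, ⁅h, u⁆⁆ v = 0) → u = 0 := by
  classical
  intro u hu hB
  obtain ⟨z, rfl⟩ := hu
  set u := (LieAlgebra.ad ℂ L x₀) z with hu_def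
  have hu' : u = ⁅x₀, z⁆ := rfl
  -- Step 1: from the hypothesis and invariance of the Killing form,
  -- deduce `⁅x₀, ⁅x₀, ⁅h, u⁆⁆⁆ = 0`.
  have step1 : ⁅x₀, ⁅x₀, ⁅h, u⁆⁆⁆ = 0 := by
    apply (LieAlgebra.IsKilling.killingForm_nondegenerate ℂ L).1
    intro w
    have hw : ⁅x₀, w⁆ ∈ LinearMap.range (LieAlgebra.ad ℂ L x₀) := ⟨w, rfl⟩
    have := hB ⁅x₀, w⁆ hw
    rw [LieModule.traceForm_apply_lie_apply', this, neg_zero]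
  -- Step 2: `⁅h, x₀⁆ = 0` since the Cartan subalgebra is abelian.
  have habel : ⁅h, x₀⁆ = 0 := by
    have h0 : ⁅(⟨h, hh⟩ : H), (⟨x₀, hx₀⟩ : H)⁆ = 0 := trivial_lie_zero _ _ _ _
    calc ⁅h, x₀⁆ = ((⁅(⟨h, hh⟩ : H), (⟨x₀, hx₀⟩ : H)⁆ : H) : L) := rfl
    _ = 0 := by rw [h0]; rfl
  have hcomm : ⁅h, u⁆ = ⁅x₀, ⁅h, z⁆⁆ := by
    rw [hu', leibniz_lie, habel, zero_lie, zero_add]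
  rw [hcomm] at step1
  -- Step 3: apply the decomposition into root spaces.
  set A : Module.End ℂ L := LieAlgebra.ad ℂ L x₀ with hA_def
  set D : Module.End ℂ L := LieAlgebra.ad ℂ L h with hD_def
  have hint : DirectSum.IsInternal fun χ : H → ℂ =>
      (rootSpace H χ : Submodule ℂ L) :=
    DirectSum.isInternal_submodule_of_iSupIndep_of_iSup_eq_top
      (LieSubmodule.iSupIndep_toSubmodule.mpr <| iSupIndep_genWeightSpace ℂ H L)
      (LieSubmodule.iSup_toSubmodule_eq_top.mpr <| iSup_genWeightSpace_eq_top ℂ H L)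
  have hAy : ∀ (χ : H → ℂ) (y : L), y ∈ rootSpace H χ → A y = χ ⟨x₀, hx₀⟩ • y := by
    intro χ y hy
    exact LieAlgebra.IsKilling.lie_eq_smul_of_mem_rootSpace hy ⟨x₀, hx₀⟩
  have hDy : ∀ (χ : H → ℂ) (y : L), y ∈ rootSpace H χ → D y = χ ⟨h, hh⟩ • y := by
    intro χ y hy
    exact LieAlgebra.IsKilling.lie_eq_smul_of_mem_rootSpace hy ⟨h, hh⟩
  set T : Module.End ℂ L := A ∘ₗ (A ∘ₗ (A ∘ₗ D)) with hT_def
  have hTy : ∀ (χ : H → ℂ) (y : L), y ∈ rootSpace H χ →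
      T y = ((χ ⟨x₀, hx₀⟩) ^ 3 * χ ⟨h, hh⟩) • y := by
    intro χ y hy
    simp only [hT_def, LinearMap.comp_apply, hDy χ y hy, map_smul, hAy χ y hy, smul_smul]
    congr 1
    ring
  have hAmapsTo : ∀ χ : H → ℂ, Set.MapsTo A ((rootSpace H χ : Submodule ℂ L) : Set L)
      ((rootSpace H χ : Submodule ℂ L) : Set L) := by
    intro χ y hy
    rw [SetLike.mem_coe, LieSubmodule.mem_toSubmodule] at hy ⊢
    rw [hAy χ y hy]
    exact Submodule.smul_mem _ _ hy
  have hTmapsTo : ∀ χ : H → ℂ, Set.MapsTo T ((rootSpace H χ : Submodule ℂ L) : Set L)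
      ((rootSpace H χ : Submodule ℂ L) : Set L) := by
    intro χ y hy
    rw [SetLike.mem_coe, LieSubmodule.mem_toSubmodule] at hy ⊢
    rw [hTy χ y hy]
    exact Submodule.smul_mem _ _ hy
  have hker : ∀ χ : H → ℂ, ∀ y ∈ (rootSpace H χ : Submodule ℂ L),
      T y = 0 → A y = 0 := by
    intro χ y hy hTy0
    rw [LieSubmodule.mem_toSubmodule] at hy
    by_cases hy0 : y = 0
    · simp [hy0]
    by_cases hc : χ ⟨x₀, hx₀⟩ = 0
    · rw [hAy χ y hy, hc, zero_smul]
    exfalso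
    rw [hTy χ y hy, smul_eq_zero] at hTy0
    rcases hTy0 with hs | hy0'
    · rcases mul_eq_zero.mp hs with h3 | hch
      · exact hc (pow_eq_zero_iff (by norm_num) |>.mp h3)
      · set W : LieModule.Weight ℂ H L := ⟨χ, fun hbot => hy0 (by
          simpa [hbot] using hy)⟩ with hW_def
        have hWnz : W.IsNonZero := by
          intro hW0
          apply hc
          have hfun : (W : H → ℂ) = 0 := hW0
          simpa [hW_def] using congr_fun hfun ⟨x₀, hx₀⟩
        exact hreg W hWnz hch
    · exact hy0 hy0'
  -- conclude
  have hTz : T z = 0 := step1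
  exact ker_le_ker_of_isInternal hint hAmapsTo hTmapsTo hker hTz
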